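/- arXiv:1509.01618 — 2 statements merged into one kernel-verified Lean document; each statement's English description precedes it below -/
import Mathlib

section
/- For every k with 0 ≤ k ≤ N, e_k(L_{C(𝒴)}) = e_k(L̃); that is, ∑_{Y ⊆ 𝒴, |Y| = k} det((L_{C(𝒴)})_Y) = ∑_{C' ⊆ C, |C'| = k} det(L̃_{C'}). -/
open Matrix Finset

variable {𝒴 : Type*}

/-- Principal minor of `A` indexed by the finite set `S`:
the determinant of the principal submatrix `A_S`. -/
noncomputable def pminor [DecidableEq 𝒴] (A : Matrix 𝒴 𝒴 ℝ) (S : Finset 𝒴) : ℝ :=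
  (A.submatrix (fun i : S => (i : 𝒴)) (fun j : S => (j : 𝒴))).det

/-- `Y` is singular with respect to the partition whose parts are the fibers of the
core map `part` (so `𝒴_c = part⁻¹(c)`): every part contains at most one element of `Y`. -/
def IsSingular [DecidableEq 𝒴] (part : 𝒴 → 𝒴) (Y : Finset 𝒴) : Prop :=
  ∀ c : 𝒴, (Y.filter fun y => part y = c).card ≤ 1

instance [DecidableEq 𝒴] [Fintype 𝒴] (part : 𝒴 → 𝒴) : DecidablePred (IsSingular part) :=
  fun _ => by unfold IsSingular; infer_instance

/-- The size `|𝒴_c|` of the part with core `c`. -/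
def psize [Fintype 𝒴] [DecidableEq 𝒴] (part : 𝒴 → 𝒴) (c : 𝒴) : ℕ :=
  (Finset.univ.filter fun y => part y = c).card

/-- The rescaled core kernel `L̃` with entries `L̃_{c,c'} = sqrt(|𝒴_c|·|𝒴_{c'}|)·L_{c,c'}`. -/
noncomputable def coreK [Fintype 𝒴] [DecidableEq 𝒴] (L : Matrix 𝒴 𝒴 ℝ) (part : 𝒴 → 𝒴) :
    Matrix 𝒴 𝒴 ℝ :=
  fun i j => Real.sqrt ((psize part i : ℝ) * (psize part j : ℝ)) * L i j

section Aux
variable [DecidableEq 𝒴]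

lemma injOn_of_singular {part : 𝒴 → 𝒴} {Y : Finset 𝒴} (h : IsSingular part Y) :
    Set.InjOn part ↑Y := by
  intro a ha b hb hab
  have h1 := h (part b)
  refine Finset.card_le_one.mp h1 a ?_ b ?_ <;> simp_all [Finset.mem_filter]

lemma pminor_zero_of_not_singular {part : 𝒴 → 𝒴} {Y : Finset 𝒴} (L : Matrix 𝒴 𝒴 ℝ)
    (h : ¬ IsSingular part Y) : pminor (L.submatrix part part) Y = 0 := by
  simp only [IsSingular, not_forall, not_le] at h
  obtain ⟨c, hc⟩ := h
  obtain ⟨a, b, ha, hb, hab⟩ := Finset.one_lt_card_iff.mp hc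
  simp only [Finset.mem_filter] at ha hb
  apply Matrix.det_zero_of_row_eq (i := (⟨a, ha.1⟩ : Y)) (j := ⟨b, hb.1⟩)
  · simpa [Subtype.ext_iff] using hab
  · funext j
    simp [Matrix.submatrix, ha.2, hb.2]

lemma pminor_singular {part : 𝒴 → 𝒴} {Y : Finset 𝒴} (L : Matrix 𝒴 𝒴 ℝ)
    (h : IsSingular part Y) :
    pminor (L.submatrix part part) Y = pminor L (Y.image part) := by
  have hinj : Set.InjOn part ↑Y := injOn_of_singular h
  have hbij : Function.Bijective
      (fun y : Y => (⟨part y, Finset.mem_image_of_mem part y.2⟩ : (Y.image part))) := by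
    constructor
    · intro a b hab
      exact Subtype.ext (hinj a.2 b.2 (by simpa [Subtype.ext_iff] using hab))
    · rintro ⟨z, hz⟩
      obtain ⟨y, hy, rfl⟩ := Finset.mem_image.mp hz
      exact ⟨⟨y, hy⟩, rfl⟩
  let e := Equiv.ofBijective _ hbij
  have : (L.submatrix (fun i : (Y.image part) => (i : 𝒴)) (fun j : (Y.image part) => (j : 𝒴))).submatrix e e
      = ((L.submatrix part part).submatrix (fun i : Y => (i : 𝒴)) (fun j : Y => (j : 𝒴))) := by
    ext i j; rfl
  unfold pminor
  rw [← this, Matrix.det_submatrix_equiv_self]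

variable [Fintype 𝒴]

lemma pminor_coreK (L : Matrix 𝒴 𝒴 ℝ) (part : 𝒴 → 𝒴) (S : Finset 𝒴) :
    pminor (coreK L part) S = (∏ c ∈ S, (psize part c : ℝ)) * pminor L S := by
  unfold pminor
  have h1 : ((coreK L part).submatrix (fun i : S => (i : 𝒴)) (fun j : S => (j : 𝒴)))
      = of fun i j : S => Real.sqrt (psize part (i : 𝒴)) *
          ((fun i j : S => Real.sqrt (psize part (j : 𝒴)) * L i j) i j) := by
    ext i j
    simp only [Matrix.submatrix_apply, Matrix.of_apply, coreK,
      Real.sqrt_mul (by positivity : (0:ℝ) ≤ (psize part (i:𝒴) : ℝ))]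
    ring
  rw [h1, Matrix.det_mul_column (fun i : S => Real.sqrt (psize part (i : 𝒴)))
    (fun i j : S => Real.sqrt (psize part (j : 𝒴)) * L i j)]
  have h2 : (Matrix.det fun i j : S => Real.sqrt (psize part (j : 𝒴)) * L i j)
      = (∏ i : S, Real.sqrt (psize part (i : 𝒴))) *
          (L.submatrix (fun i : S => (i : 𝒴)) (fun j : S => (j : 𝒴))).det :=
    Matrix.det_mul_row (fun j : S => Real.sqrt (psize part (j : 𝒴))) _
  rw [h2, ← mul_assoc, ← Finset.prod_mul_distrib]
  congr 1
  rw [← Finset.prod_attach S (fun c => (psize part c : ℝ))]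
  exact Finset.prod_congr rfl fun i _ => Real.mul_self_sqrt (by positivity)

end Aux

lemma card_transversals [Fintype 𝒴] [DecidableEq 𝒴] (part : 𝒴 → 𝒴) (C' : Finset 𝒴) (k : ℕ)
    (hC' : C'.card = k) :
    ((((Finset.univ : Finset 𝒴)).powersetCard k).filter
        fun Y => IsSingular part Y ∧ Y.image part = C').card
      = ∏ c ∈ C', psize part c := by
  rw [show (∏ c ∈ C', psize part c)
      = (C'.pi fun c => Finset.univ.filter fun y => part y = c).card from
      (Finset.card_pi _ _).symm]
  refine (Finset.card_bij (fun f _ => C'.attach.image fun c => f c.1 c.2) ?_ ?_ ?_).symm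
  · intro f hf
    have hfp : ∀ c (hc : c ∈ C'), part (f c hc) = c := by
      intro c hc
      have := (Finset.mem_pi.mp hf) c hc
      exact (Finset.mem_filter.mp this).2
    have hinj : ∀ (a : {x // x ∈ C'}) (_ : a ∈ C'.attach) (b : {x // x ∈ C'})
        (_ : b ∈ C'.attach), f a.1 a.2 = f b.1 b.2 → a = b := by
      intro a _ b _ hab
      have : (a : 𝒴) = b := by rw [← hfp a.1 a.2, ← hfp b.1 b.2, hab]
      exact Subtype.ext this
    have hcard : (C'.attach.image fun c => f c.1 c.2).card = k := by
      rw [Finset.card_image_of_injOn (fun a ha b hb => hinj a ha b hb),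
        Finset.card_attach, hC']
    have himg : (C'.attach.image fun c => f c.1 c.2).image part = C' := by
      ext z
      simp only [Finset.mem_image, Finset.mem_attach, true_and, Subtype.exists]
      constructor
      · rintro ⟨y, ⟨c, hc, rfl⟩, rfl⟩
        rw [hfp c hc]; exact hc
      · intro hz
        exact ⟨f z hz, ⟨z, hz, rfl⟩, hfp z hz⟩
    refine Finset.mem_filter.mpr ⟨Finset.mem_powersetCard.mpr ⟨Finset.subset_univ _, hcard⟩,
      ?_, himg⟩
    intro c
    refine Finset.card_le_one.mpr fun a ha b hb => ?_
    simp only [Finset.mem_filter, Finset.mem_image, Finset.mem_attach, true_and,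
      Subtype.exists] at ha hb
    obtain ⟨⟨c₁, hc₁, rfl⟩, hpa⟩ := ha
    obtain ⟨⟨c₂, hc₂, rfl⟩, hpb⟩ := hb
    rw [hfp c₁ hc₁] at hpa
    rw [hfp c₂ hc₂] at hpb
    subst hpa; subst hpb; rfl
  · intro f hf g hg heq
    have hfp : ∀ c (hc : c ∈ C'), part (f c hc) = c := by
      intro c hc; exact (Finset.mem_filter.mp ((Finset.mem_pi.mp hf) c hc)).2
    have hgp : ∀ c (hc : c ∈ C'), part (g c hc) = c := by
      intro c hc; exact (Finset.mem_filter.mp ((Finset.mem_pi.mp hg) c hc)).2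
    funext c hc
    have : f c hc ∈ C'.attach.image fun c => g c.1 c.2 := by
      rw [← heq]
      exact Finset.mem_image.mpr ⟨⟨c, hc⟩, Finset.mem_attach _ _, rfl⟩
    obtain ⟨⟨c', hc'⟩, _, hcc⟩ := Finset.mem_image.mp this
    have : c' = c := by rw [← hgp c' hc', hcc, hfp c hc]
    subst this
    exact hcc.symm
  · intro Y hY
    obtain ⟨hYk, hsing, himg⟩ := Finset.mem_filter.mp hY
    have hex : ∀ c ∈ C', ∃ y, y ∈ Y ∧ part y = c := by
      intro c hc
      rw [← himg] at hc
      obtain ⟨y, hy, hyc⟩ := Finset.mem_image.mp hc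
      exact ⟨y, hy, hyc⟩
    refine ⟨fun c hc => (hex c hc).choose, ?_, ?_⟩
    · refine Finset.mem_pi.mpr fun c hc => ?_
      exact Finset.mem_filter.mpr ⟨Finset.mem_univ _, (hex c hc).choose_spec.2⟩
    · have hsub : (C'.attach.image fun c => (hex c.1 c.2).choose) ⊆ Y := by
        intro y hy
        obtain ⟨c, _, rfl⟩ := Finset.mem_image.mp hy
        exact (hex c.1 c.2).choose_spec.1
      have hYcard : Y.card = k := (Finset.mem_powersetCard.mp hYk).2
      simp only
      refine Finset.eq_of_subset_of_card_le hsub ?_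
      rw [hYcard, Finset.card_image_of_injOn, Finset.card_attach, hC']
      intro a _ b _ hab
      have hab' : (hex a.1 a.2).choose = (hex b.1 b.2).choose := hab
      have : (a : 𝒴) = b := by
        rw [← (hex a.1 a.2).choose_spec.2, ← (hex b.1 b.2).choose_spec.2, hab']
      exact Subtype.ext this

/-- `e_k(L_{C(𝒴)}) = e_k(L̃)` for every `0 ≤ k ≤ N`: the sum of the
`k×k` principal minors of the replaced kernel equals the sum of the `k×k`
principal minors of the rescaled core kernel over `k`-subsets of the coreset `C`. -/
theorem esym_replaced_eq_esym_coreK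
    [Fintype 𝒴] [DecidableEq 𝒴]
    (L : Matrix 𝒴 𝒴 ℝ)
    (part : 𝒴 → 𝒴) (C : Finset 𝒴) (M : ℕ) (hM : C.card = M)
    (hmem : ∀ y, part y ∈ C) (hfix : ∀ c ∈ C, part c = c)
    (k : ℕ) (hk : k ≤ Fintype.card 𝒴) :
    ∑ Y ∈ Finset.univ.powersetCard k, pminor (L.submatrix part part) Y
      = ∑ C' ∈ C.powersetCard k, pminor (coreK L part) C' := by
  rw [← Finset.sum_filter_of_ne
    (p := IsSingular part) (fun Y _ h => by
      by_contra hn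
      exact h (pminor_zero_of_not_singular L hn))]
  rw [Finset.sum_congr rfl (fun Y hY =>
    pminor_singular L (Finset.mem_filter.mp hY).2)]
  have hmaps : ∀ Y ∈ (Finset.univ.powersetCard k).filter (IsSingular part),
      Y.image part ∈ C.powersetCard k := by
    intro Y hY
    obtain ⟨hYk, hsing⟩ := Finset.mem_filter.mp hY
    refine Finset.mem_powersetCard.mpr ⟨fun z hz => ?_, ?_⟩
    · obtain ⟨y, _, rfl⟩ := Finset.mem_image.mp hz
      exact hmem y
    · rw [Finset.card_image_of_injOn (injOn_of_singular hsing)]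
      exact (Finset.mem_powersetCard.mp hYk).2
  rw [← Finset.sum_fiberwise_of_maps_to hmaps (fun Y => pminor L (Y.image part))]
  refine Finset.sum_congr rfl fun C' hC' => ?_
  obtain ⟨hC'C, hC'k⟩ := Finset.mem_powersetCard.mp hC'
  have hinner : ∑ Y ∈ ((Finset.univ.powersetCard k).filter (IsSingular part)).filter
      (fun Y => Y.image part = C'), pminor L (Y.image part)
      = ∑ Y ∈ ((Finset.univ.powersetCard k).filter (IsSingular part)).filter
      (fun Y => Y.image part = C'), pminor L C' := by
    refine Finset.sum_congr rfl fun Y hY => ?_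
    rw [(Finset.mem_filter.mp hY).2]
  rw [hinner, Finset.sum_const, Finset.filter_filter, card_transversals part C' k hC'k,
    pminor_coreK, nsmul_eq_mul, Nat.cast_prod]
end

section
/- Suppose 1 ≤ k ≤ M and det(L_S) > 0 for every S ⊆ 𝒴 with |S| ≤ k. For each core c ∈ C define ρ_c = max_{u,v ∈ 𝒴_c} sqrt(L_{uu} + L_{vv} − 2L_{uv}) and d_c = min over all u ∈ 𝒴_c and all (k−1)-singular S with S ∩ 𝒴_c = ∅ of sqrt( det(L_{S∪{u}}) / det(L_S) ) (with det(L_∅) = 1). If d_c > ρ_c for every c ∈ C, then, setting γ = max_{c ∈ C} d_c/(d_c − ρ_c), every k-singular set Y ⊆ 𝒴 satisfies γ^{−2k} · det(L_Y) ≤ det(L_{C(Y)}) ≤ γ^{2k} · det(L_Y). -/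
open Matrix Finset

variable {𝒴 : Type*}

section Aux

variable [Fintype 𝒴] [DecidableEq 𝒴]

/-- The principal submatrix of `L` indexed by `S`. -/
noncomputable def Asub (L : Matrix 𝒴 𝒴 ℝ) (S : Finset 𝒴) : Matrix S S ℝ :=
  L.submatrix (fun i : S => (i : 𝒴)) (fun j : S => (j : 𝒴))

omit [Fintype 𝒴] in
lemma pminor_eq_det_Asub (L : Matrix 𝒴 𝒴 ℝ) (S : Finset 𝒴) :
    pminor L S = (Asub L S).det := rfl

/-- The Schur-complement bilinear form of `L` with respect to the block `S`. -/
noncomputable def schurQ (L : Matrix 𝒴 𝒴 ℝ) (S : Finset 𝒴) (u v : 𝒴) : ℝ :=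
  L u v - (fun s : S => L u s) ⬝ᵥ ((Asub L S)⁻¹ *ᵥ fun s : S => L s v)

/-- The equivalence between `S ⊕ Unit` and `insert u S` when `u ∉ S`. -/
def insertUnitEquiv {u : 𝒴} {S : Finset 𝒴} (hu : u ∉ S) :
    (↥S ⊕ Unit) ≃ ↥(insert u S : Finset 𝒴) where
  toFun := Sum.elim (fun s => ⟨s, Finset.mem_insert_of_mem s.2⟩)
    (fun _ => ⟨u, Finset.mem_insert_self u S⟩)
  invFun x := if h : (x : 𝒴) ∈ S then Sum.inl ⟨x, h⟩ else Sum.inr ()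
  left_inv := by
    rintro (⟨s, hs⟩ | ⟨⟩)
    · simp [hs]
    · simp [hu]
  right_inv := by
    rintro ⟨x, hx⟩
    rcases Finset.mem_insert.mp hx with rfl | h
    · simp [hu]
    · simp [h]

lemma pminor_insert (L : Matrix 𝒴 𝒴 ℝ) {S : Finset 𝒴} {u : 𝒴} (hu : u ∉ S)
    (hS : IsUnit (Asub L S).det) :
    pminor L (insert u S) = pminor L S * schurQ L S u u := by
  classical
  haveI : Invertible (Asub L S) := (Asub L S).invertibleOfIsUnitDet hS
  set e := insertUnitEquiv hu with he
  have h1 : pminor L (insert u S) = ((Asub L (insert u S)).submatrix e e).det :=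
    (Matrix.det_submatrix_equiv_self e _).symm
  have h2 : (Asub L (insert u S)).submatrix e e =
      Matrix.fromBlocks (Asub L S) (Matrix.of fun (s : S) (_ : Unit) => L s u)
        (Matrix.of fun (_ : Unit) (t : S) => L u t) (Matrix.of fun _ _ => L u u) := by
    ext i j
    cases i <;> cases j <;> rfl
  rw [h1, h2, Matrix.det_fromBlocks₁₁]
  rw [pminor_eq_det_Asub]
  congr 1
  rw [Matrix.det_unique, Matrix.invOf_eq_nonsing_inv]
  show L u u - _ = _
  unfold schurQ
  congr 1
  simp only [Matrix.mul_apply, Matrix.of_apply, dotProduct, Matrix.mulVec,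
    Finset.sum_mul, Finset.mul_sum]
  rw [Finset.sum_comm]
  congr 1; ext i; congr 1; ext j; ring


lemma posDef_of_psd_det_ne_zero {n : Type*} [Fintype n] [DecidableEq n]
    {A : Matrix n n ℝ} (hA : A.PosSemidef) (h : A.det ≠ 0) :
    A.PosDef := by
  refine posDef_iff_dotProduct_mulVec.mpr ⟨hA.1, fun x hx => ?_⟩
  rcases (hA.dotProduct_mulVec_nonneg x).lt_or_eq with h' | h'
  · exact h'
  · exfalso
    have hzero : A *ᵥ x = 0 := (hA.dotProduct_mulVec_zero_iff x).mp h'.symm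
    have hinj : Function.Injective (A.mulVec) :=
      Matrix.mulVec_injective_iff_isUnit.mpr ((Matrix.isUnit_iff_isUnit_det A).mpr h.isUnit)
    exact hx (hinj (by simp [hzero]))

/-- The equivalence between `S ⊕ Fin 2` and `insert u (insert v S)`. -/
def insertTwoEquiv {u v : 𝒴} {S : Finset 𝒴} (hu : u ∉ S) (hv : v ∉ S) (huv : u ≠ v) :
    (↥S ⊕ Fin 2) ≃ ↥(insert u (insert v S) : Finset 𝒴) where
  toFun := Sum.elim
    (fun s => ⟨s, Finset.mem_insert_of_mem (Finset.mem_insert_of_mem s.2)⟩)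
    (fun i => if i = 0 then ⟨u, Finset.mem_insert_self _ _⟩
      else ⟨v, Finset.mem_insert_of_mem (Finset.mem_insert_self _ _)⟩)
  invFun x := if h : (x : 𝒴) ∈ S then Sum.inl ⟨x, h⟩
    else if (x : 𝒴) = u then Sum.inr 0 else Sum.inr 1
  left_inv := by
    rintro (⟨s, hs⟩ | i)
    · simp [hs]
    · fin_cases i
      · simp [hu]
      · simp [hv, huv.symm]
  right_inv := by
    rintro ⟨x, hx⟩
    rcases Finset.mem_insert.mp hx with rfl | hx'
    · simp [hu]
    · rcases Finset.mem_insert.mp hx' with rfl | h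
      · simp [hv, huv.symm]
      · simp [h]

lemma schur_facts {L : Matrix 𝒴 𝒴 ℝ} (hL : L.PosSemidef) {S : Finset 𝒴} {u v : 𝒴}
    (hu : u ∉ S) (hv : v ∉ S) (huv : u ≠ v) (hS : 0 < pminor L S)
    (hvv : 0 < schurQ L S v v) :
    (schurQ L S u v) ^ 2 ≤ schurQ L S u u * schurQ L S v v ∧
      schurQ L S u u + schurQ L S v v - 2 * schurQ L S u v ≤ L u u + L v v - 2 * L u v := by
  classical
  have hsym : ∀ a b, L a b = L b a := fun a b => by
    have := congrFun (congrFun hL.1 a) b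
    simpa [Matrix.conjTranspose_apply] using this.symm
  set A := Asub L S with hA
  have hApsd : A.PosSemidef := hL.submatrix _
  have hApd : A.PosDef := posDef_of_psd_det_ne_zero hApsd (by
    rw [← pminor_eq_det_Asub]; exact hS.ne')
  haveI : Invertible A := A.invertibleOfIsUnitDet hApd.det_pos.ne'.isUnit
  set c2 : Fin 2 → 𝒴 := ![u, v] with hc2
  set B : Matrix S (Fin 2) ℝ := Matrix.of fun s i => L s (c2 i) with hB
  set D : Matrix (Fin 2) (Fin 2) ℝ := Matrix.of fun i j => L (c2 i) (c2 j) with hD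
  set e := insertTwoEquiv hu hv huv with he
  have hc20 : c2 0 = u := rfl
  have hc21 : c2 1 = v := rfl
  have hblock : (Asub L (insert u (insert v S))).submatrix e e = Matrix.fromBlocks A B Bᴴ D := by
    ext i j
    rcases i with s | i <;> rcases j with t | j
    · rfl
    · fin_cases j <;> rfl
    · fin_cases i <;>
        · show L _ (_ : 𝒴) = star _
          rw [star_trivial]
          exact hsym _ _
    · fin_cases i <;> fin_cases j <;> rfl
  have hTpsd : ((Asub L (insert u (insert v S))).submatrix e e).PosSemidef :=
    (hL.submatrix _).submatrix ⇑e
  rw [hblock] at hTpsd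
  have hQ : (D - Bᴴ * A⁻¹ * B).PosSemidef :=
    (Matrix.PosDef.fromBlocks₁₁ B D hApd).mp hTpsd
  have hR : (Bᴴ * A⁻¹ * B).PosSemidef :=
    (hApd.inv.posSemidef).conjTranspose_mul_mul_same B
  have hentry : ∀ i j, (Bᴴ * A⁻¹ * B) i j =
      (fun s : S => L (c2 i) s) ⬝ᵥ ((Asub L S)⁻¹ *ᵥ fun s : S => L s (c2 j)) := by
    intro i j
    simp only [Matrix.mul_apply, Matrix.conjTranspose_apply, Matrix.of_apply, star_trivial,
      dotProduct, Matrix.mulVec, hB, Finset.sum_mul, Finset.mul_sum, ← hA]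
    rw [Finset.sum_comm]
    refine Finset.sum_congr rfl fun s _ => Finset.sum_congr rfl fun t _ => ?_
    rw [hsym (s : 𝒴) (c2 i)]; ring
  have hQentry : ∀ i j, (D - Bᴴ * A⁻¹ * B) i j = schurQ L S (c2 i) (c2 j) := by
    intro i j
    rw [Matrix.sub_apply, hentry i j]
    rfl
  have hQ00 : (D - Bᴴ * A⁻¹ * B) 0 0 = schurQ L S u u := by rw [hQentry, hc20]
  have hQ01 : (D - Bᴴ * A⁻¹ * B) 0 1 = schurQ L S u v := by rw [hQentry, hc20, hc21]
  have hQ10 : (D - Bᴴ * A⁻¹ * B) 1 0 = schurQ L S v u := by rw [hQentry, hc20, hc21]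
  have hQ11 : (D - Bᴴ * A⁻¹ * B) 1 1 = schurQ L S v v := by rw [hQentry, hc21]
  have hsymQ : schurQ L S v u = schurQ L S u v := by
    have h := congrFun (congrFun hQ.1 0) 1
    rw [Matrix.conjTranspose_apply, star_trivial, hQ01, hQ10] at h
    exact h
  have hsub : ∀ i j, (Bᴴ * A⁻¹ * B) i j = L (c2 i) (c2 j) - schurQ L S (c2 i) (c2 j) := by
    intro i j
    have h := hQentry i j
    rw [Matrix.sub_apply] at h
    have hDij : D i j = L (c2 i) (c2 j) := rfl
    linarith [h]
  have dot2 : ∀ (Q : Matrix (Fin 2) (Fin 2) ℝ) (x : Fin 2 → ℝ),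
      star x ⬝ᵥ Q *ᵥ x = x 0 * (Q 0 0 * x 0 + Q 0 1 * x 1) + x 1 * (Q 1 0 * x 0 + Q 1 1 * x 1) := by
    intro Q x
    simp [dotProduct, Matrix.mulVec, Fin.sum_univ_two]
  constructor
  · have h20 := hQ.dotProduct_mulVec_nonneg ![schurQ L S v v, -(schurQ L S u v)]
    rw [dot2] at h20
    simp only [Matrix.cons_val_zero, Matrix.cons_val_one, Matrix.head_cons,
      hQ00, hQ01, hQ10, hQ11, hsymQ] at h20
    nlinarith
  · have h21 := hR.dotProduct_mulVec_nonneg ![1, -1]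
    rw [dot2, hsub 0 0, hsub 0 1, hsub 1 0, hsub 1 1, hc20, hc21] at h21
    simp only [Matrix.cons_val_zero, Matrix.cons_val_one, Matrix.head_cons] at h21
    have hLsym := hsym u v
    nlinarith [h21, hsymQ]

lemma isSingular_iff_injOn {part : 𝒴 → 𝒴} {Z : Finset 𝒴} :
    IsSingular part Z ↔ ∀ a ∈ Z, ∀ b ∈ Z, part a = part b → a = b := by
  constructor
  · intro h a ha b hb hab
    have := h (part b)
    rw [Finset.card_le_one] at this
    exact this a (Finset.mem_filter.mpr ⟨ha, hab⟩) b (Finset.mem_filter.mpr ⟨hb, rfl⟩)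
  · intro h c
    rw [Finset.card_le_one]
    intro a ha b hb
    rw [Finset.mem_filter] at ha hb
    exact h a ha.1 b hb.1 (ha.2.trans hb.2.symm)

lemma pminor_submatrix {L : Matrix 𝒴 𝒴 ℝ} {part : 𝒴 → 𝒴} {Y : Finset 𝒴}
    (hinj : ∀ a ∈ Y, ∀ b ∈ Y, part a = part b → a = b) :
    pminor (L.submatrix part part) Y = pminor L (Y.image part) := by
  classical
  have hbij : Function.Bijective (fun y : Y => (⟨part y, Finset.mem_image_of_mem part y.2⟩ :
      ↥(Y.image part))) := by
    constructor
    · rintro ⟨a, ha⟩ ⟨b, hb⟩ hab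
      simp only [Subtype.mk.injEq] at hab ⊢
      exact hinj a ha b hb hab
    · rintro ⟨b, hb⟩
      obtain ⟨a, ha, rfl⟩ := Finset.mem_image.mp hb
      exact ⟨⟨a, ha⟩, rfl⟩
  set e := Equiv.ofBijective _ hbij with he
  have : (L.submatrix part part).submatrix (fun i : Y => (i : 𝒴)) (fun j : Y => (j : 𝒴)) =
      (Asub L (Y.image part)).submatrix e e := rfl
  rw [pminor, this, Matrix.det_submatrix_equiv_self, ← pminor_eq_det_Asub]

end Aux
lemma sq_le_of_sqrt_le {X r : ℝ} (h0 : 0 ≤ r) (h : Real.sqrt X ≤ r) : X ≤ r ^ 2 := by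
  rcases le_or_gt X 0 with h' | h'
  · nlinarith [sq_nonneg r]
  · nlinarith [Real.sq_sqrt h'.le, Real.sqrt_nonneg X, sq_nonneg (r - Real.sqrt X)]

lemma abs_sub_le_scalar {a b q X r : ℝ} (h0 : 0 ≤ r)
    (hCS : q ≤ a * b) (hcontr : a ^ 2 + b ^ 2 - 2 * q ≤ X) (hX : X ≤ r ^ 2) :
    a - b ≤ r ∧ b - a ≤ r := by
  have h1 : (a - b) ^ 2 ≤ r ^ 2 := by nlinarith
  constructor <;> nlinarith

lemma gamma_step_scalar {a b r dc γ : ℝ} (ha0 : 0 ≤ a) (hb0 : 0 ≤ b) (hr0 : 0 ≤ r)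
    (hsep : r < dc) (hda : dc ≤ a) (hdb : dc ≤ b)
    (h1 : a - b ≤ r) (h2 : b - a ≤ r) (hγ : dc ≤ γ * (dc - r)) :
    b ^ 2 ≤ γ ^ 2 * a ^ 2 ∧ a ^ 2 ≤ γ ^ 2 * b ^ 2 := by
  have hγ0 : 0 < γ := by nlinarith
  have hba : b ≤ γ * a := by nlinarith [mul_nonneg hr0 (sub_nonneg.mpr hda)]
  have hab : a ≤ γ * b := by nlinarith [mul_nonneg hr0 (sub_nonneg.mpr hdb)]
  constructor <;> nlinarith [mul_nonneg (mul_nonneg hγ0.le ha0) hb0]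

lemma mul_le_sq_mul_scalar {p x y γ : ℝ} (hp : 0 < p) (h : x ≤ γ ^ 2 * y) :
    p * x ≤ γ ^ 2 * (p * y) := by nlinarith

/-- with `ρ_c`, `d_c` as in Lemma 4 and `γ = max_{c∈C} d_c/(d_c−ρ_c)`, if
`d_c > ρ_c` for all cores then every `k`-singular `Y` satisfies
`γ^{−2k}·det(L_Y) ≤ det(L_{C(Y)}) ≤ γ^{2k}·det(L_Y)`. -/
theorem det_replaced_gamma_bound
    [Fintype 𝒴] [DecidableEq 𝒴]
    (L : Matrix 𝒴 𝒴 ℝ) (hL : L.PosSemidef)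
    (part : 𝒴 → 𝒴) (C : Finset 𝒴) (M : ℕ) (hMcard : C.card = M)
    (hmem : ∀ y, part y ∈ C) (hfix : ∀ c ∈ C, part c = c)
    (k : ℕ) (hk : 1 ≤ k) (hkM : k ≤ M)
    (hdet : ∀ S : Finset 𝒴, S.card ≤ k → 0 < pminor L S)
    (ρ d : 𝒴 → ℝ)
    (hρ : ∀ c ∈ C, IsGreatest
      {x : ℝ | ∃ u v : 𝒴, part u = c ∧ part v = c ∧
        x = Real.sqrt (L u u + L v v - 2 * L u v)} (ρ c))
    (hd : ∀ c ∈ C, IsLeast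
      {x : ℝ | ∃ u : 𝒴, part u = c ∧ ∃ S : Finset 𝒴, S.card = k - 1 ∧ IsSingular part S ∧
        (∀ s ∈ S, part s ≠ c) ∧ x = Real.sqrt (pminor L (insert u S) / pminor L S)} (d c))
    (hsep : ∀ c ∈ C, ρ c < d c)
    (γ : ℝ) (hγ : IsGreatest {x : ℝ | ∃ c ∈ C, x = d c / (d c - ρ c)} γ)
    (Y : Finset 𝒴) (hcard : Y.card = k) (hsing : IsSingular part Y) :
    (γ ^ (2 * k))⁻¹ * pminor L Y ≤ pminor (L.submatrix part part) Y ∧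
      pminor (L.submatrix part part) Y ≤ γ ^ (2 * k) * pminor L Y := by
  classical
  have hinjY := isSingular_iff_injOn.mp hsing
  have hρ0 : ∀ c ∈ C, 0 ≤ ρ c := by
    intro c hc
    obtain ⟨u', v', _, _, hx⟩ := (hρ c hc).1
    rw [hx]; exact Real.sqrt_nonneg _
  have hd0 : ∀ c ∈ C, 0 < d c := fun c hc => (hρ0 c hc).trans_lt (hsep c hc)
  have hγc : ∀ c ∈ C, d c / (d c - ρ c) ≤ γ := fun c hc => hγ.2 ⟨c, hc, rfl⟩
  have hγ1 : (1:ℝ) ≤ γ := by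
    obtain ⟨c, hc, hcγ⟩ := hγ.1
    rw [hcγ, le_div_iff₀ (by linarith [hsep c hc, hρ0 c hc])]
    linarith [hρ0 c hc]
  have hγ0 : (0:ℝ) < γ := lt_of_lt_of_le one_pos hγ1
  -- one-step replacement bound
  have step : ∀ Z : Finset 𝒴, Z.card = k → IsSingular part Z → ∀ y ∈ Z,
      pminor L (insert (part y) (Z.erase y)) ≤ γ ^ 2 * pminor L Z ∧
      pminor L Z ≤ γ ^ 2 * pminor L (insert (part y) (Z.erase y)) := by
    intro Z hZcard hZsing y hy
    have hZpos : 0 < pminor L Z := hdet Z (by rw [hZcard])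
    by_cases hyc : part y = y
    · rw [hyc, Finset.insert_erase hy]
      have hfac : 0 ≤ (γ - 1) * (γ + 1) * pminor L Z :=
        mul_nonneg (mul_nonneg (by linarith) (by linarith)) hZpos.le
      constructor <;> nlinarith [hfac]
    · have hcC : part y ∈ C := hmem y
      have hZinj := isSingular_iff_injOn.mp hZsing
      set S := Z.erase y with hSdef
      have hyS : y ∉ S := Finset.notMem_erase y Z
      have hScard : S.card = k - 1 := by rw [hSdef, Finset.card_erase_of_mem hy, hZcard]
      have hSpos : 0 < pminor L S := hdet S (by omega)
      have hSsing : IsSingular part S := isSingular_iff_injOn.mpr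
        (fun a ha b hb hab =>
          hZinj a (Finset.mem_of_mem_erase ha) b (Finset.mem_of_mem_erase hb) hab)
      have hSc : ∀ s ∈ S, part s ≠ part y := by
        intro s hs hsc
        exact (Finset.ne_of_mem_erase hs) (hZinj s (Finset.mem_of_mem_erase hs) y hy hsc)
      have hcS : part y ∉ S := fun hcs => hSc (part y) hcs (hfix _ hcC)
      have hcy : part y ≠ y := hyc
      have hins : insert y S = Z := Finset.insert_erase hy
      have hSunit : IsUnit (Asub L S).det := by
        rw [← pminor_eq_det_Asub]; exact hSpos.ne'.isUnit
      have hq_y : pminor L Z = pminor L S * schurQ L S y y := by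
        rw [← hins]; exact pminor_insert L hyS hSunit
      have hq_c : pminor L (insert (part y) S) = pminor L S * schurQ L S (part y) (part y) :=
        pminor_insert L hcS hSunit
      have hqyy : 0 < schurQ L S y y := by
        have h := hZpos
        rw [hq_y] at h
        exact (mul_pos_iff_of_pos_left hSpos).mp h
      have hinsc_pos : 0 < pminor L (insert (part y) S) := by
        refine hdet _ ?_
        calc (insert (part y) S).card ≤ S.card + 1 := Finset.card_insert_le _ _
        _ ≤ k := by omega
      have hqcc : 0 < schurQ L S (part y) (part y) := by
        have h := hinsc_pos
        rw [hq_c] at h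
        exact (mul_pos_iff_of_pos_left hSpos).mp h
      -- lower bounds by d
      have hdy : d (part y) ≤ Real.sqrt (schurQ L S y y) := by
        have h := (hd _ hcC).2 ⟨y, rfl, S, hScard, hSsing, hSc, rfl⟩
        rwa [pminor_insert L hyS hSunit, mul_div_cancel_left₀ _ hSpos.ne'] at h
      have hdc : d (part y) ≤ Real.sqrt (schurQ L S (part y) (part y)) := by
        have h := (hd _ hcC).2 ⟨part y, hfix _ hcC, S, hScard, hSsing, hSc, rfl⟩
        rwa [pminor_insert L hcS hSunit, mul_div_cancel_left₀ _ hSpos.ne'] at h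
      -- upper bound by ρ
      have hρb : Real.sqrt (L y y + L (part y) (part y) - 2 * L y (part y)) ≤ ρ (part y) :=
        (hρ _ hcC).2 ⟨y, part y, rfl, hfix _ hcC, rfl⟩
      obtain ⟨hCS, hcontr⟩ := schur_facts hL hyS hcS hcy.symm hSpos hqcc
      have ha2 : Real.sqrt (schurQ L S y y) ^ 2 = schurQ L S y y := Real.sq_sqrt hqyy.le
      have hb2 : Real.sqrt (schurQ L S (part y) (part y)) ^ 2 = schurQ L S (part y) (part y) :=
        Real.sq_sqrt hqcc.le
      have ha0 : 0 ≤ Real.sqrt (schurQ L S y y) := Real.sqrt_nonneg _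
      have hb0 : 0 ≤ Real.sqrt (schurQ L S (part y) (part y)) := Real.sqrt_nonneg _
      have hρ0' : 0 ≤ ρ (part y) := hρ0 _ hcC
      have hsep' : ρ (part y) < d (part y) := hsep _ hcC
      have hxρ : L y y + L (part y) (part y) - 2 * L y (part y) ≤ ρ (part y) ^ 2 :=
        sq_le_of_sqrt_le hρ0' hρb
      have hqab : schurQ L S y (part y) ≤
          Real.sqrt (schurQ L S y y) * Real.sqrt (schurQ L S (part y) (part y)) := by
        have hCS' : (schurQ L S y (part y)) ^ 2 ≤
            (Real.sqrt (schurQ L S y y) * Real.sqrt (schurQ L S (part y) (part y))) ^ 2 := by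
          rw [mul_pow, ha2, hb2]; exact hCS
        have h1 := Real.sqrt_le_sqrt hCS'
        rw [Real.sqrt_sq_eq_abs, Real.sqrt_sq (mul_nonneg ha0 hb0)] at h1
        exact (le_abs_self _).trans h1
      have hcontr' : Real.sqrt (schurQ L S y y) ^ 2 +
          Real.sqrt (schurQ L S (part y) (part y)) ^ 2 - 2 * schurQ L S y (part y) ≤
          L y y + L (part y) (part y) - 2 * L y (part y) := by
        rw [ha2, hb2]; exact hcontr
      obtain ⟨habs1, habs2⟩ := abs_sub_le_scalar hρ0' hqab hcontr' hxρ
      have hγc' := hγc _ hcC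
      have hγineq : d (part y) ≤ γ * (d (part y) - ρ (part y)) := by
        rw [div_le_iff₀ (by linarith)] at hγc'
        linarith
      obtain ⟨hsq1, hsq2⟩ := gamma_step_scalar ha0 hb0 hρ0' hsep' hdy hdc habs1 habs2 hγineq
      rw [ha2, hb2] at hsq1 hsq2
      constructor
      · rw [hq_c, hq_y]
        exact mul_le_sq_mul_scalar hSpos hsq1
      · rw [hq_y, hq_c]
        exact mul_le_sq_mul_scalar hSpos hsq2
  -- main induction: replace elements of T one by one
  have main : ∀ T : Finset 𝒴, T ⊆ Y →
      ((Y \ T) ∪ T.image part).card = k ∧ IsSingular part ((Y \ T) ∪ T.image part) ∧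
      pminor L ((Y \ T) ∪ T.image part) ≤ γ ^ (2 * T.card) * pminor L Y ∧
      pminor L Y ≤ γ ^ (2 * T.card) * pminor L ((Y \ T) ∪ T.image part) := by
    intro T
    induction T using Finset.induction_on with
    | empty =>
      intro _
      simp only [Finset.sdiff_empty, Finset.image_empty, Finset.union_empty,
        Finset.card_empty, Nat.mul_zero, pow_zero, one_mul]
      exact ⟨hcard, hsing, le_refl _, le_refl _⟩
    | @insert y T hyT ih =>
      intro hsub
      have hyY : y ∈ Y := hsub (Finset.mem_insert_self y T)
      have hTY : T ⊆ Y := (Finset.subset_insert y T).trans hsub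
      obtain ⟨hZcard, hZsing, hup, hlo⟩ := ih hTY
      set Z := (Y \ T) ∪ T.image part with hZdef
      have hZinj := isSingular_iff_injOn.mp hZsing
      have hyZ : y ∈ Z := Finset.mem_union_left _ (Finset.mem_sdiff.mpr ⟨hyY, hyT⟩)
      have hpartfix : part (part y) = part y := hfix _ (hmem y)
      have hsetid : (Y \ insert y T) ∪ (insert y T).image part =
          insert (part y) (Z.erase y) := by
        ext a
        simp only [Finset.mem_union, Finset.mem_sdiff, Finset.mem_insert, Finset.mem_image,
          Finset.mem_erase, hZdef]
        constructor
        · rintro (⟨haY, hnot⟩ | ⟨t, ht, rfl⟩)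
          · have h1 : a ≠ y := fun h => hnot (Or.inl h)
            have h2 : a ∉ T := fun h => hnot (Or.inr h)
            exact Or.inr ⟨h1, Or.inl ⟨haY, h2⟩⟩
          · rcases ht with rfl | htT
            · exact Or.inl rfl
            · refine Or.inr ⟨?_, Or.inr ⟨t, htT, rfl⟩⟩
              intro hpty
              have hpp : part (part t) = part t := hfix _ (hmem t)
              have : t = y := hinjY t (hTY htT) y hyY (by rw [← hpty]; exact hpp.symm)
              exact hyT (this ▸ htT)
        · rintro (rfl | ⟨hay, (⟨haY, haT⟩ | ⟨t, htT, rfl⟩)⟩)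
          · exact Or.inr ⟨y, Or.inl rfl, rfl⟩
          · refine Or.inl ⟨haY, ?_⟩
            rintro (rfl | h)
            · exact hay rfl
            · exact haT h
          · exact Or.inr ⟨t, Or.inr htT, rfl⟩
      obtain ⟨s1, s2⟩ := step Z hZcard hZsing y hyZ
      have hpyZ : part y ∉ Z.erase y := by
        intro h
        obtain ⟨hne, hmemZ⟩ := Finset.mem_erase.mp h
        exact hne (hZinj _ hmemZ y hyZ hpartfix)
      have hncard : (insert (part y) (Z.erase y)).card = k := by
        rw [Finset.card_insert_of_notMem hpyZ, Finset.card_erase_of_mem hyZ, hZcard]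
        omega
      have hnsing : IsSingular part (insert (part y) (Z.erase y)) := by
        rw [isSingular_iff_injOn]
        intro p hp q hq hpq
        rcases Finset.mem_insert.mp hp with rfl | hp' <;>
          rcases Finset.mem_insert.mp hq with rfl | hq'
        · rfl
        · obtain ⟨hqy, hqZ⟩ := Finset.mem_erase.mp hq'
          exact absurd (hZinj q hqZ y hyZ (by rw [← hpq, hpartfix])) hqy
        · obtain ⟨hpy, hpZ⟩ := Finset.mem_erase.mp hp'
          exact absurd (hZinj p hpZ y hyZ (by rw [hpq, hpartfix])) hpy
        · exact hZinj p (Finset.mem_of_mem_erase hp') q (Finset.mem_of_mem_erase hq') hpq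
      have hpow : γ ^ (2 * (insert y T).card) = γ ^ (2 * T.card) * γ ^ 2 := by
        rw [Finset.card_insert_of_notMem hyT, ← pow_add]
        ring_nf
      have hpowpos : (0:ℝ) < γ ^ (2 * T.card) := pow_pos hγ0 _
      have hZpos : 0 < pminor L Z := hdet Z (le_of_eq hZcard)
      have hnpos : 0 < pminor L (insert (part y) (Z.erase y)) := hdet _ (le_of_eq hncard)
      rw [hsetid]
      refine ⟨hncard, hnsing, ?_, ?_⟩
      · rw [hpow]
        calc pminor L (insert (part y) (Z.erase y)) ≤ γ ^ 2 * pminor L Z := s1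
        _ ≤ γ ^ 2 * (γ ^ (2 * T.card) * pminor L Y) := by
            have h2 : (0:ℝ) < γ ^ 2 := pow_pos hγ0 2
            exact mul_le_mul_of_nonneg_left hup h2.le
        _ = γ ^ (2 * T.card) * γ ^ 2 * pminor L Y := by ring
      · rw [hpow]
        calc pminor L Y ≤ γ ^ (2 * T.card) * pminor L Z := hlo
        _ ≤ γ ^ (2 * T.card) * (γ ^ 2 * pminor L (insert (part y) (Z.erase y))) :=
            mul_le_mul_of_nonneg_left s2 hpowpos.le
        _ = γ ^ (2 * T.card) * γ ^ 2 * pminor L (insert (part y) (Z.erase y)) := by ring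
  obtain ⟨_, _, hup, hlo⟩ := main Y (subset_refl Y)
  rw [Finset.sdiff_self, Finset.empty_union, hcard] at hup hlo
  have himg : pminor (L.submatrix part part) Y = pminor L (Y.image part) :=
    pminor_submatrix hinjY
  constructor
  · rw [himg, inv_mul_le_iff₀ (pow_pos hγ0 _)]
    exact hlo
  · rw [himg]
    exact hup
end
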